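/- For all u ≥ 0, (1 + u)·log(1 + u) − u ≥ u² / (2(1 + u/3)). -/

import Mathlib

open Real Set

private lemma hd_g (u : ℝ) (hu : (0:ℝ) ≤ u) :
    HasDerivAt (fun x : ℝ => Real.log (1+x) - 3/2 + 27/(2*(x+3)^2))
      (1/(1+u) - 27/(u+3)^3) u := by
  have h1 : (1:ℝ) + u ≠ 0 := by linarith
  have h3 : (u:ℝ) + 3 ≠ 0 := by linarith
  have hlog : HasDerivAt (fun x : ℝ => Real.log (1+x)) (1/(1+u)) u := by
    have := (Real.hasDerivAt_log h1).comp u ((hasDerivAt_id u).const_add 1)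
    simpa [Function.comp_def] using this
  have hq : HasDerivAt (fun x : ℝ => 2*(x+3)^2) (2*(2*(u+3))) u := by
    have h : HasDerivAt (fun x : ℝ => (x+3)^2) (2*(u+3)) u := by
      have h := ((hasDerivAt_id u).add_const 3).pow 2
      simpa [mul_comm, Pi.pow_def] using h
    simpa using h.const_mul 2
  have hden : 2*(u+3)^2 ≠ 0 := by positivity
  have hinv := (hasDerivAt_const u (27:ℝ)).div hq hden
  have hg := (hlog.sub_const (3/2)).add hinv
  refine hg.congr_deriv ?_
  field_simp
  ring

private lemma g_nonneg (u : ℝ) (hu : (0:ℝ) ≤ u) :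
    0 ≤ Real.log (1+u) - 3/2 + 27/(2*(u+3)^2) := by
  set g : ℝ → ℝ := fun x => Real.log (1+x) - 3/2 + 27/(2*(x+3)^2) with hg
  have mono : MonotoneOn g (Ici 0) := by
    apply monotoneOn_of_deriv_nonneg (convex_Ici 0)
    · exact fun x hx => (hd_g x hx).continuousAt.continuousWithinAt
    · intro x hx
      rw [interior_Ici] at hx
      exact (hd_g x hx.le).differentiableAt.differentiableWithinAt
    · intro x hx
      rw [interior_Ici] at hx
      rw [(hd_g x hx.le).deriv]
      have hx0 : (0:ℝ) < x := hx
      have hp : (0:ℝ) < (x+3)^3 := pow_pos (by linarith) 3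
      rw [sub_nonneg, div_le_div_iff₀ hp (by linarith)]
      nlinarith [hx0.le, sq_nonneg x]
  have h0 : g 0 = 0 := by simp [hg, Real.log_one]; norm_num
  have := mono (self_mem_Ici) hu hu
  rw [h0] at this
  exact this

private lemma hd_F (u : ℝ) (hu : (0:ℝ) ≤ u) :
    HasDerivAt (fun x : ℝ => (1+x) * Real.log (1+x) - (5/2)*x + 9/2 - 27/(2*(x+3)))
      (Real.log (1+u) - 3/2 + 27/(2*(u+3)^2)) u := by
  have h1 : (1:ℝ) + u ≠ 0 := by linarith
  have h3 : (u:ℝ) + 3 ≠ 0 := by linarith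
  have hlog : HasDerivAt (fun x : ℝ => Real.log (1+x)) (1/(1+u)) u := by
    have := (Real.hasDerivAt_log h1).comp u ((hasDerivAt_id u).const_add 1)
    simpa [Function.comp_def] using this
  have hid : HasDerivAt (fun x : ℝ => 1 + x) 1 u := (hasDerivAt_id u).const_add 1
  have hmul : HasDerivAt (fun x : ℝ => (1+x) * Real.log (1+x))
      (1 * Real.log (1+u) + (1+u) * (1/(1+u))) u := hid.mul hlog
  have hden : 2*(u+3) ≠ 0 := by positivity
  have hq : HasDerivAt (fun x : ℝ => 2*(x+3)) 2 u := by
    simpa using (((hasDerivAt_id u).add_const 3).const_mul 2)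
  have hinv := (hasDerivAt_const u (27:ℝ)).div hq hden
  have hF := (((hmul.sub (((hasDerivAt_id u).const_mul (5/2:ℝ)))).add_const (9/2:ℝ)).sub hinv)
  refine hF.congr_deriv ?_
  field_simp
  ring

theorem stmt_7 (u : ℝ) (hu : 0 ≤ u) :
    u ^ 2 / (2 * (1 + u / 3)) ≤ (1 + u) * Real.log (1 + u) - u := by
  set F : ℝ → ℝ := fun x => (1+x) * Real.log (1+x) - (5/2)*x + 9/2 - 27/(2*(x+3)) with hF
  have mono : MonotoneOn F (Ici 0) := by
    apply monotoneOn_of_deriv_nonneg (convex_Ici 0)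
    · exact fun x hx => (hd_F x hx).continuousAt.continuousWithinAt
    · intro x hx
      rw [interior_Ici] at hx
      exact (hd_F x hx.le).differentiableAt.differentiableWithinAt
    · intro x hx
      rw [interior_Ici] at hx
      rw [(hd_F x hx.le).deriv]
      exact g_nonneg x hx.le
  have h0 : F 0 = 0 := by simp [hF, Real.log_one]; norm_num
  have hFu := mono (self_mem_Ici) hu hu
  rw [h0] at hFu
  have h3 : (0:ℝ) < u + 3 := by linarith
  have key : u ^ 2 / (2 * (1 + u / 3)) = (3/2)*u - 9/2 + 27/(2*(u+3)) := by
    field_simp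
    ring
  rw [key]
  simp only [hF] at hFu
  linarith
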